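/- For every integer k ≥ 1 and every real t > 0, det((p_t(x_i, x_j))_{i,j=0}^{k}) = (2πt)^{−(k+1)/2} · e^{−2(k+1)(k+2)/(3tk)} · ∏_{j=1}^{k} (δ^{j} − 1)^{k+1−j}, where δ = e^{4/(t k²)}. -/

import Mathlib

/-- The one-dimensional heat kernel `p_t(a,b)`. -/
noncomputable def heatK (t a b : ℝ) : ℝ :=
    (Real.sqrt (2 * Real.pi * t))⁻¹ * Real.exp (-(a - b) ^ 2 / (2 * t))

/-- The equally spaced starting points `x_i = (2i - k)/k`. -/
noncomputable def xPt (k : ℕ) (i : Fin (k + 1)) : ℝ := (2 * (i : ℝ) - k) / k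

open Finset Real

private lemma fin_double (n : ℕ) (F : ℕ → ℕ → ℝ) :
    (∏ i : Fin n, ∏ j ∈ Finset.Ioi i, F (i:ℕ) (j:ℕ))
      = ∏ i ∈ range n, ∏ j ∈ Ioo i n, F i j := by
  rw [← Fin.prod_univ_eq_prod_range (fun m => ∏ j ∈ Ioo m n, F m j)]
  refine Finset.prod_congr rfl fun i _ => ?_
  refine Finset.prod_bij (fun j _ => (j:ℕ)) ?_ ?_ ?_ ?_
  · intro j hj
    rw [mem_Ioi] at hj
    exact mem_Ioo.mpr ⟨hj, j.isLt⟩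
  · intro a _ b _ h; exact Fin.val_injective h
  · intro b hb; simp only [mem_Ioo] at hb
    exact ⟨⟨b, hb.2⟩, by simpa [Finset.mem_Ioi, Fin.lt_iff_val_lt_val] using hb.1, rfl⟩
  · intro j _; rfl

private lemma double_g (n : ℕ) (g : ℕ → ℝ) :
    ∏ i ∈ range n, ∏ j ∈ Ioo i n, g (j - i) = ∏ d ∈ Icc 1 (n-1), g d ^ (n - d) := by
  have h1 : ∀ i ∈ range n, (∏ j ∈ Ioo i n, g (j-i)) = ∏ d ∈ Icc 1 (n-1-i), g d := by
    intro i hi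
    refine Finset.prod_nbij' (fun j => j - i) (fun d => d + i) ?_ ?_ ?_ ?_ ?_
    · intro a ha; simp only [mem_Ioo, mem_Icc] at *; omega
    · intro a ha; simp only [mem_Ioo, mem_Icc, mem_range] at *; omega
    · intro a ha; simp only [mem_Ioo] at ha; show a - i + i = a; omega
    · intro a _; show a + i - i = a; omega
    · intro a _; rfl
  rw [Finset.prod_congr rfl h1,
    Finset.prod_comm' (t' := Icc 1 (n-1)) (s' := fun d => range (n - d)) (by
      intro x y; simp only [mem_range, mem_Icc]; omega)]
  exact Finset.prod_congr rfl fun d _ => by rw [prod_const, card_range]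

private lemma vdm_split (n : ℕ) (x : ℝ) :
    ∏ i ∈ range n, ∏ j ∈ Ioo i n, (x^j - x^i)
      = (∏ i ∈ range n, (x^i)^(n-1-i)) * ∏ d ∈ Icc 1 (n-1), (x^d - 1)^(n - d) := by
  rw [← double_g n (fun d => x^d - 1), ← Finset.prod_mul_distrib]
  refine Finset.prod_congr rfl fun i hi => ?_
  have : ∀ j ∈ Ioo i n, x^j - x^i = x^i * (x^(j-i) - 1) := by
    intro j hj
    simp only [mem_Ioo] at hj
    rw [mul_sub, mul_one, ← pow_add, Nat.add_sub_cancel' hj.1.le]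
  rw [Finset.prod_congr rfl this, Finset.prod_mul_distrib, Finset.prod_const,
    Nat.card_Ioo]
  congr 2
  omega

private lemma sum_id' (n : ℕ) : ∑ i ∈ range n, (i:ℝ) = n*(n-1)/2 := by
  induction n with
  | zero => simp
  | succ n ih => rw [Finset.sum_range_succ, ih]; push_cast; ring

private lemma sum_sq' (n : ℕ) : ∑ i ∈ range n, (i:ℝ)^2 = n*(n-1)*(2*n-1)/6 := by
  induction n with
  | zero => simp
  | succ n ih => rw [Finset.sum_range_succ, ih]; push_cast; ring

theorem det_heat_kernel_eq (k : ℕ) (hk : 1 ≤ k) (t : ℝ) (ht : 0 < t) :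
    Matrix.det (Matrix.of fun i j : Fin (k + 1) => heatK t (xPt k i) (xPt k j)) =
      (2 * Real.pi * t) ^ (-(((k : ℝ) + 1) / 2)) *
        Real.exp (-2 * ((k : ℝ) + 1) * ((k : ℝ) + 2) / (3 * t * k)) *
        ∏ j ∈ Finset.Icc 1 k,
          (Real.exp (4 / (t * (k : ℝ) ^ 2)) ^ j - 1) ^ (k + 1 - j) := by
  have hk0 : (k:ℝ) ≠ 0 := by positivity
  have ht0 : t ≠ 0 := ne_of_gt ht
  set s : ℝ := (Real.sqrt (2 * Real.pi * t))⁻¹ with hs_def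
  set a : ℝ := 4 / (t * (k:ℝ)^2) with ha_def
  set u : ℕ → ℝ := fun m => Real.exp (-2*((m:ℕ):ℝ)^2/(t*(k:ℝ)^2)) with hu_def
  -- matrix decomposition
  have hmat : (Matrix.of fun i j : Fin (k + 1) => heatK t (xPt k i) (xPt k j)) =
      s • (Matrix.diagonal (fun i : Fin (k+1) => u i) *
        Matrix.vandermonde (fun i : Fin (k+1) => Real.exp a ^ (i:ℕ)) *
        Matrix.diagonal (fun i : Fin (k+1) => u i)) := by
    ext i j
    simp only [Matrix.of_apply, Matrix.smul_apply, Matrix.mul_diagonal,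
      Matrix.diagonal_mul, Matrix.vandermonde_apply, smul_eq_mul]
    rw [heatK, xPt, xPt]
    congr 1
    simp only [hu_def]
    rw [← Real.exp_nat_mul, ← Real.exp_nat_mul, ← Real.exp_add, ← Real.exp_add]
    congr 1
    rw [ha_def]
    field_simp
    ring
  rw [hmat, Matrix.det_smul, Matrix.det_mul, Matrix.det_mul, Matrix.det_diagonal,
    Matrix.det_vandermonde]
  rw [Fintype.card_fin]
  rw [Fin.prod_univ_eq_prod_range (fun m => u m) (k+1)]
  -- vandermonde product
  have hv : (∏ i : Fin (k+1), ∏ j ∈ Finset.Ioi i,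
        (Real.exp a ^ (j:ℕ) - Real.exp a ^ (i:ℕ)))
      = (∏ i ∈ range (k+1), (Real.exp a ^ i)^(k-i)) *
        ∏ d ∈ Icc 1 k, (Real.exp a ^ d - 1)^(k + 1 - d) := by
    rw [fin_double (k+1) (fun i j => Real.exp a ^ j - Real.exp a ^ i),
      vdm_split (k+1) (Real.exp a)]
    simp only [Nat.add_sub_cancel]
  rw [hv]
  -- exp products
  have hP1 : (∏ i ∈ range (k+1), u i)
      = Real.exp (∑ i ∈ range (k+1), -2*((i:ℕ):ℝ)^2/(t*(k:ℝ)^2)) := by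
    rw [Real.exp_sum]
  have hP2 : (∏ i ∈ range (k+1), (Real.exp a ^ i)^(k-i))
      = Real.exp (∑ i ∈ range (k+1), ((k:ℝ)-i) * ((i:ℝ)*a)) := by
    rw [Real.exp_sum]
    refine Finset.prod_congr rfl fun i hi => ?_
    rw [← Real.exp_nat_mul, ← Real.exp_nat_mul]
    congr 1
    rw [Nat.cast_sub (by simp only [mem_range] at hi; omega)]
  rw [hP1, hP2]
  -- collapse sums
  have hS1 := sum_id' (k+1)
  have hS2 := sum_sq' (k+1)
  have hsum1 : (∑ i ∈ range (k+1), -2*((i:ℕ):ℝ)^2/(t*(k:ℝ)^2))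
      = -2/(t*(k:ℝ)^2) * (((k:ℝ)+1)*k*(2*k+1)/6) := by
    calc (∑ i ∈ range (k+1), -2*((i:ℕ):ℝ)^2/(t*(k:ℝ)^2))
        = ∑ i ∈ range (k+1), (-2/(t*(k:ℝ)^2)) * ((i:ℝ))^2 :=
          Finset.sum_congr rfl fun i _ => by ring
      _ = (-2/(t*(k:ℝ)^2)) * ∑ i ∈ range (k+1), ((i:ℝ))^2 := by rw [← Finset.mul_sum]
      _ = _ := by rw [hS2]; push_cast; ring
  have hsum2 : (∑ i ∈ range (k+1), ((k:ℝ)-i) * ((i:ℝ)*a))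
      = a * ((k:ℝ) * (((k:ℝ)+1)*k/2) - ((k:ℝ)+1)*k*(2*k+1)/6) := by
    calc (∑ i ∈ range (k+1), ((k:ℝ)-i) * ((i:ℝ)*a))
        = ∑ i ∈ range (k+1), (a*(k:ℝ)*(i:ℝ) - a*((i:ℝ))^2) :=
          Finset.sum_congr rfl fun i _ => by ring
      _ = a*(k:ℝ)*(∑ i ∈ range (k+1), (i:ℝ)) - a*(∑ i ∈ range (k+1), ((i:ℝ))^2) := by
          rw [Finset.sum_sub_distrib, ← Finset.mul_sum, ← Finset.mul_sum]
      _ = _ := by rw [hS1, hS2]; push_cast; ring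
  have hfin : (∑ i ∈ range (k+1), -2*((i:ℕ):ℝ)^2/(t*(k:ℝ)^2)) +
      (∑ i ∈ range (k+1), ((k:ℝ)-i) * ((i:ℝ)*a)) +
      (∑ i ∈ range (k+1), -2*((i:ℕ):ℝ)^2/(t*(k:ℝ)^2))
      = -2 * ((k : ℝ) + 1) * ((k : ℝ) + 2) / (3 * t * k) := by
    rw [hsum1, hsum2, ha_def]
    field_simp
    ring
  have hX : (0:ℝ) < 2 * Real.pi * t := by positivity
  have hspow : s ^ (k+1) = (2 * Real.pi * t) ^ (-(((k : ℝ) + 1) / 2)) := by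
    rw [hs_def, Real.sqrt_eq_rpow, ← Real.rpow_neg hX.le,
      ← Real.rpow_natCast ((2*Real.pi*t) ^ (-(1/2:ℝ))) (k+1), ← Real.rpow_mul hX.le]
    congr 1
    push_cast
    ring
  rw [hspow, ← hfin, Real.exp_add, Real.exp_add]
  ring
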